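/- Let F be a field, m ≥ 1 an integer, n = 2m+1 (so n ≥ 3 is odd), and let I = (X^{3n-1}, X^{3n-4}Y^3, X^3Y^{3n-4}, Y^{3n-1}) in F[X,Y]. Then (XY)^{(3n-1)n/2} ∉ I^n, while (XY)^{(3n-1)n/2}·(X^{3n-1})^{2m-1} ∈ I^{n+2m-1}. Consequently (XY)^{(3n-1)n/2} ∈ ~(I^n) \ I^n and I^n is not Ratliff-Rush closed. -/

import Mathlib

open scoped Pointwise

/-- The Ratliff-Rush closure of the power `I^n`:  `⋃_{k≥0} (I^{n+k} : I^k)`. -/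
noncomputable def rrPow {R : Type*} [CommRing R] (I : Ideal R) (n : ℕ) : Ideal R :=
  ⨆ k : ℕ, (I ^ (n + k)).colon ((I ^ k : Ideal R) : Set R)

private lemma rr_char {R : Type*} [CommRing R] (u v w z : R) (K : ℕ) (g : R)
    (hg : g ∈ ({u, v, w, z} : Set R) ^ K) :
    ∃ a b c f : ℕ, a + b + c + f = K ∧ g = u ^ a * v ^ b * w ^ c * z ^ f := by
  induction K generalizing g with
  | zero => exact ⟨0, 0, 0, 0, rfl, by simpa using hg⟩
  | succ K ih =>
    rw [pow_succ] at hg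
    obtain ⟨p, hp, q, hq, rfl⟩ := Set.mem_mul.1 hg
    obtain ⟨a, b, c, f, hs, rfl⟩ := ih p hp
    simp only [Set.mem_insert_iff, Set.mem_singleton_iff] at hq
    rcases hq with rfl | rfl | rfl | rfl
    · exact ⟨a + 1, b, c, f, by omega, by ring⟩
    · exact ⟨a, b + 1, c, f, by omega, by ring⟩
    · exact ⟨a, b, c + 1, f, by omega, by ring⟩
    · exact ⟨a, b, c, f + 1, by omega, by ring⟩

private lemma rr_mem_pow {R : Type*} [CommRing R] {S : Set R} {u v w z : R}
    (hu : u ∈ S) (hv : v ∈ S) (hw : w ∈ S) (hz : z ∈ S)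
    (a b c f N : ℕ) (hN : a + b + c + f = N) :
    u ^ a * v ^ b * w ^ c * z ^ f ∈ (Ideal.span S) ^ N := by
  subst hN
  rw [pow_add, pow_add, pow_add]
  exact Ideal.mul_mem_mul (Ideal.mul_mem_mul (Ideal.mul_mem_mul
    (Ideal.pow_mem_pow (Ideal.subset_span hu) a)
    (Ideal.pow_mem_pow (Ideal.subset_span hv) b))
    (Ideal.pow_mem_pow (Ideal.subset_span hw) c))
    (Ideal.pow_mem_pow (Ideal.subset_span hz) f)

private lemma rr_arith (k a b c f : ℕ) (hsum : a + b + c + f = 2 * k + 3)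
    (hx : (6 * k + 8) * a + (6 * k + 5) * b + 3 * c = (3 * k + 4) * (2 * k + 3)) : False := by
  have hx' : ((6 * k + 8) * a + (6 * k + 5) * b + 3 * c : ℤ) = (3 * k + 4) * (2 * k + 3) := by
    exact_mod_cast hx
  have h1 : (3 : ℤ) * (c - b) = (3 * k + 4) * ((2 * k + 3) - 2 * (a + b)) := by
    linear_combination hx'
  have h3 : (3 : ℤ) ∣ ((2 * k + 3) - 2 * (a + b)) := by
    have h2 : (3 : ℤ) ∣ (3 * k + 4) * ((2 * k + 3) - 2 * (a + b)) := ⟨_, h1.symm⟩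
    have h4 : (3 * (k : ℤ) + 4) * ((2 * k + 3) - 2 * (a + b))
        = 3 * ((k + 1) * ((2 * k + 3) - 2 * (a + b))) + ((2 * k + 3) - 2 * (a + b)) := by ring
    omega
  obtain ⟨j, hj⟩ := h3
  have hcb : (c : ℤ) - b = (3 * k + 4) * j := by rw [hj] at h1; linarith [h1]
  have ha : (0 : ℤ) ≤ a := by positivity
  have hb : (0 : ℤ) ≤ b := by positivity
  have hc : (0 : ℤ) ≤ c := by positivity
  have hf : (0 : ℤ) ≤ f := by positivity
  have hs : (a : ℤ) + b + c + f = 2 * k + 3 := by exact_mod_cast hsum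
  rcases lt_trichotomy j 0 with hjs | rfl | hjs
  · have hj1 : j ≤ -1 := by omega
    nlinarith [mul_nonneg (by linarith : (0:ℤ) ≤ -j - 1) (by positivity : (0:ℤ) ≤ 6 * (k:ℤ) + 5)]
  · omega
  · have hj1 : 1 ≤ j := by omega
    nlinarith [mul_nonneg (by linarith : (0:ℤ) ≤ j - 1) (by positivity : (0:ℤ) ≤ 6 * (k:ℤ) + 5)]

private lemma rr_key (k a0 b0 c0 f0 : ℕ) (hs0 : a0 + b0 + c0 + f0 = 4 * k + 1) :
    ∃ a b c f : ℕ, a + b + c + f = 6 * k + 4 ∧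
      (3*k+4)*(2*k+3) + ((6*k+8)*a0 + (6*k+5)*b0 + 3*c0) = (6*k+8)*a + (6*k+5)*b + 3*c ∧
      (3*k+4)*(2*k+3) + (3*b0 + (6*k+5)*c0 + (6*k+8)*f0) = 3*b + (6*k+5)*c + (6*k+8)*f := by
  have hs0' : (a0:ℤ) + b0 + c0 + f0 = 4*k+1 := by exact_mod_cast hs0
  by_cases hA : a0 + c0 ≤ 2 * k
  · by_cases hB : b0 ≤ c0 + 3*k + 4
    · -- branch 1 : a = a0+b0+k, b = 0, c = c0+3k+4-b0, f = 2k-a0-c0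
      obtain ⟨c, hc⟩ : ∃ c, b0 + c = c0 + 3*k + 4 := ⟨c0 + 3*k + 4 - b0, by omega⟩
      obtain ⟨f, hf⟩ : ∃ f, a0 + c0 + f = 2*k := ⟨2*k - (a0 + c0), by omega⟩
      have hc' : (b0:ℤ) + c = c0 + 3*k + 4 := by exact_mod_cast hc
      have hf' : (a0:ℤ) + c0 + f = 2*k := by exact_mod_cast hf
      refine ⟨a0+b0+k, 0, c, f, by omega, ?_, ?_⟩
      · have : ((3*k+4)*(2*k+3) + ((6*k+8)*a0 + (6*k+5)*b0 + 3*c0) : ℤ)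
            = (6*k+8)*(a0+b0+k) + (6*k+5)*0 + 3*c := by linear_combination (-3 : ℤ) * hc'
        exact_mod_cast this
      · have : ((3*k+4)*(2*k+3) + (3*b0 + (6*k+5)*c0 + (6*k+8)*f0) : ℤ)
            = 3*0 + (6*k+5)*c + (6*k+8)*f := by
          linear_combination (-(6*(k:ℤ)+5)) * hc' + (-(6*(k:ℤ)+8)) * hf' + (6*(k:ℤ)+8) * hs0'
        exact_mod_cast this
    · -- branch 2 : a = a0+c0+4k+4, b = b0-c0-3k-4, c = 0, f = 5k+4-a0-b0
      obtain ⟨b, hb⟩ : ∃ b, c0 + 3*k + 4 + b = b0 := ⟨b0 - (c0 + 3*k + 4), by omega⟩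
      obtain ⟨f, hf⟩ : ∃ f, a0 + b0 + f = 5*k + 4 := ⟨5*k + 4 - (a0 + b0), by omega⟩
      have hb' : (c0:ℤ) + 3*k + 4 + b = b0 := by exact_mod_cast hb
      have hf' : (a0:ℤ) + b0 + f = 5*k + 4 := by exact_mod_cast hf
      refine ⟨a0+c0+4*k+4, b, 0, f, by omega, ?_, ?_⟩
      · have : ((3*k+4)*(2*k+3) + ((6*k+8)*a0 + (6*k+5)*b0 + 3*c0) : ℤ)
            = (6*k+8)*(a0+c0+4*k+4) + (6*k+5)*b + 3*0 := by
          linear_combination (-(6*(k:ℤ)+5)) * hb'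
        exact_mod_cast this
      · have : ((3*k+4)*(2*k+3) + (3*b0 + (6*k+5)*c0 + (6*k+8)*f0) : ℤ)
            = 3*b + (6*k+5)*0 + (6*k+8)*f := by
          linear_combination (-3:ℤ) * hb' + (-(6*(k:ℤ)+8)) * hf' + (6*(k:ℤ)+8) * hs0'
        exact_mod_cast this
  · by_cases hB : c0 ≤ b0 + 3*k + 4
    · -- branch 3 : a = a0+c0-2k-1, b = b0+3k+4-c0, c = 0, f = 5k+1-a0-b0
      obtain ⟨a, ha⟩ : ∃ a, a + (2*k+1) = a0 + c0 := ⟨a0 + c0 - (2*k+1), by omega⟩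
      obtain ⟨b, hb⟩ : ∃ b, c0 + b = b0 + 3*k + 4 := ⟨b0 + 3*k + 4 - c0, by omega⟩
      obtain ⟨f, hf⟩ : ∃ f, a0 + b0 + f = 5*k + 1 := ⟨5*k + 1 - (a0 + b0), by omega⟩
      have ha' : (a:ℤ) + (2*k+1) = a0 + c0 := by exact_mod_cast ha
      have hb' : (c0:ℤ) + b = b0 + 3*k + 4 := by exact_mod_cast hb
      have hf' : (a0:ℤ) + b0 + f = 5*k + 1 := by exact_mod_cast hf
      refine ⟨a, b, 0, f, by omega, ?_, ?_⟩
      · have : ((3*k+4)*(2*k+3) + ((6*k+8)*a0 + (6*k+5)*b0 + 3*c0) : ℤ)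
            = (6*k+8)*a + (6*k+5)*b + 3*0 := by
          linear_combination (-(6*(k:ℤ)+8)) * ha' + (-(6*(k:ℤ)+5)) * hb'
        exact_mod_cast this
      · have : ((3*k+4)*(2*k+3) + (3*b0 + (6*k+5)*c0 + (6*k+8)*f0) : ℤ)
            = 3*b + (6*k+5)*0 + (6*k+8)*f := by
          linear_combination (-3:ℤ) * hb' + (-(6*(k:ℤ)+8)) * hf' + (6*(k:ℤ)+8) * hs0'
        exact_mod_cast this
    · -- branch 4 : a = a0+b0+k+3, b = 0, c = c0-b0-3k-4, f = 8k+5-a0-c0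
      obtain ⟨c, hc⟩ : ∃ c, b0 + 3*k + 4 + c = c0 := ⟨c0 - (b0 + 3*k + 4), by omega⟩
      obtain ⟨f, hf⟩ : ∃ f, a0 + c0 + f = 8*k + 5 := ⟨8*k + 5 - (a0 + c0), by omega⟩
      have hc' : (b0:ℤ) + 3*k + 4 + c = c0 := by exact_mod_cast hc
      have hf' : (a0:ℤ) + c0 + f = 8*k + 5 := by exact_mod_cast hf
      refine ⟨a0+b0+k+3, 0, c, f, by omega, ?_, ?_⟩
      · have : ((3*k+4)*(2*k+3) + ((6*k+8)*a0 + (6*k+5)*b0 + 3*c0) : ℤ)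
            = (6*k+8)*(a0+b0+k+3) + (6*k+5)*0 + 3*c := by
          linear_combination (-3:ℤ) * hc'
        exact_mod_cast this
      · have : ((3*k+4)*(2*k+3) + (3*b0 + (6*k+5)*c0 + (6*k+8)*f0) : ℤ)
            = 3*0 + (6*k+5)*c + (6*k+8)*f := by
          linear_combination (-(6*(k:ℤ)+5)) * hc' + (-(6*(k:ℤ)+8)) * hf' + (6*(k:ℤ)+8) * hs0'
        exact_mod_cast this

theorem stmt_11 (F : Type*) [Field F] (m : ℕ) (hm : 1 ≤ m) (n : ℕ) (hn : n = 2 * m + 1)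
    (X Y : MvPolynomial (Fin 2) F)
    (hX : X = MvPolynomial.X 0) (hY : Y = MvPolynomial.X 1)
    (I : Ideal (MvPolynomial (Fin 2) F))
    (hI : I = Ideal.span {X ^ (3 * n - 1), X ^ (3 * n - 4) * Y ^ 3,
      X ^ 3 * Y ^ (3 * n - 4), Y ^ (3 * n - 1)}) :
    (X * Y) ^ ((3 * n - 1) * n / 2) ∉ I ^ n ∧
    (X * Y) ^ ((3 * n - 1) * n / 2) * (X ^ (3 * n - 1)) ^ (2 * m - 1) ∈
      I ^ (n + 2 * m - 1) ∧
    (X * Y) ^ ((3 * n - 1) * n / 2) ∈ rrPow I n ∧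
    rrPow I n ≠ I ^ n := by
  obtain ⟨k, rfl⟩ : ∃ k, m = k + 1 := ⟨m - 1, by omega⟩
  subst hn hX hY hI
  rw [show 3 * (2 * (k + 1) + 1) - 1 = 6 * k + 8 from by omega,
      show 3 * (2 * (k + 1) + 1) - 4 = 6 * k + 5 from by omega,
      show 2 * (k + 1) + 1 + 2 * (k + 1) - 1 = 4 * k + 4 from by omega,
      show 2 * (k + 1) - 1 = 2 * k + 1 from by omega,
      show 2 * (k + 1) + 1 = 2 * k + 3 from by omega,
      show (6 * k + 8) * (2 * k + 3) / 2 = (3 * k + 4) * (2 * k + 3) from by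
        rw [show (6 * k + 8) * (2 * k + 3) = 2 * ((3 * k + 4) * (2 * k + 3)) from by ring]
        exact Nat.mul_div_cancel_left _ (by norm_num)]

  set u : MvPolynomial (Fin 2) F := MvPolynomial.X 0 ^ (6 * k + 8) with hu
  set v : MvPolynomial (Fin 2) F := MvPolynomial.X 0 ^ (6 * k + 5) * MvPolynomial.X 1 ^ 3 with hv
  set w : MvPolynomial (Fin 2) F := MvPolynomial.X 0 ^ 3 * MvPolynomial.X 1 ^ (6 * k + 5) with hw
  set z : MvPolynomial (Fin 2) F := MvPolynomial.X 1 ^ (6 * k + 8) with hz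
  set S : Set (MvPolynomial (Fin 2) F) := {u, v, w, z} with hS
  have hchar : ∀ (K : ℕ) (g : MvPolynomial (Fin 2) F), g ∈ S ^ K →
      ∃ a b c f : ℕ, a + b + c + f = K ∧
        g = MvPolynomial.X 0 ^ ((6*k+8)*a + (6*k+5)*b + 3*c)
            * MvPolynomial.X 1 ^ (3*b + (6*k+5)*c + (6*k+8)*f) := by
    intro K g hg
    obtain ⟨a, b, c, f, h1, rfl⟩ := rr_char u v w z K g hg
    exact ⟨a, b, c, f, h1, by rw [hu, hv, hw, hz]; ring⟩
  have hmemS : ∀ a b c f N : ℕ, a + b + c + f = N →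
      MvPolynomial.X 0 ^ ((6*k+8)*a + (6*k+5)*b + 3*c)
        * MvPolynomial.X 1 ^ (3*b + (6*k+5)*c + (6*k+8)*f) ∈ (Ideal.span S) ^ N := by
    intro a b c f N hN
    have hid : MvPolynomial.X 0 ^ ((6*k+8)*a + (6*k+5)*b + 3*c)
        * MvPolynomial.X 1 ^ (3*b + (6*k+5)*c + (6*k+8)*f)
        = u ^ a * v ^ b * w ^ c * z ^ f := by rw [hu, hv, hw, hz]; ring
    rw [hid]
    exact rr_mem_pow (by simp [hS]) (by simp [hS]) (by simp [hS]) (by simp [hS]) a b c f N hN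
  have hA : (MvPolynomial.X 0 * MvPolynomial.X 1 : MvPolynomial (Fin 2) F)
      ^ ((3*k+4)*(2*k+3)) ∉ (Ideal.span S) ^ (2*k+3) := by
    intro hmem0
    set μ : Fin 2 →₀ ℕ := Finsupp.single 0 ((3*k+4)*(2*k+3)) + Finsupp.single 1 ((3*k+4)*(2*k+3)) with hμ
    rw [show (Ideal.span S)^(2*k+3) = Ideal.span (S^(2*k+3)) from Submodule.span_pow S _] at hmem0
    have key : ∀ p, p ∈ Ideal.span (S ^ (2*k+3)) →
        ∀ h : MvPolynomial (Fin 2) F, MvPolynomial.coeff μ (h * p) = 0 := by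
      intro p hp
      induction hp using Submodule.span_induction with
      | mem g hg =>
        obtain ⟨a, b, c, f, hsum, rfl⟩ := hchar _ g hg
        intro h
        rw [MvPolynomial.X_pow_eq_monomial, MvPolynomial.X_pow_eq_monomial,
            MvPolynomial.monomial_mul, one_mul, MvPolynomial.coeff_mul_monomial']
        have hnot : ¬ (Finsupp.single (0 : Fin 2) ((6*k+8)*a + (6*k+5)*b + 3*c)
            + Finsupp.single 1 (3*b + (6*k+5)*c + (6*k+8)*f)) ≤ μ := by
          intro hle
          have h0 := Finsupp.le_def.mp hle 0
          have h1 := Finsupp.le_def.mp hle 1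
          rw [hμ] at h0 h1
          simp only [Finsupp.add_apply, Finsupp.single_apply] at h0 h1
          norm_num at h0 h1
          have hPQ : ((6*k+8)*a + (6*k+5)*b + 3*c) + (3*b + (6*k+5)*c + (6*k+8)*f)
              = (3*k+4)*(2*k+3) + (3*k+4)*(2*k+3) := by
            have hs' : (a:ℤ) + b + c + f = 2*k+3 := by exact_mod_cast hsum
            have hZ : (((6*k+8)*a + (6*k+5)*b + 3*c : ℕ) : ℤ)
                + ((3*b + (6*k+5)*c + (6*k+8)*f : ℕ) : ℤ)
                = ((3*k+4)*(2*k+3) : ℕ) + ((3*k+4)*(2*k+3) : ℕ) := by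
              push_cast
              linear_combination (6*(k:ℤ)+8) * hs'
            exact_mod_cast hZ
          have hPE : (6*k+8)*a + (6*k+5)*b + 3*c = (3*k+4)*(2*k+3) := by omega
          exact rr_arith k a b c f hsum hPE
        rw [if_neg hnot]
      | zero => intro h; simp
      | add p q hp hq ih1 ih2 =>
        intro h
        rw [mul_add, MvPolynomial.coeff_add, ih1 h, ih2 h, add_zero]
      | smul r p hp ih =>
        intro h
        rw [smul_eq_mul, ← mul_assoc]
        exact ih (h * r)
    have hco := key _ hmem0 1
    rw [one_mul] at hco
    have hone : MvPolynomial.coeff μ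
        ((MvPolynomial.X 0 * MvPolynomial.X 1 : MvPolynomial (Fin 2) F) ^ ((3*k+4)*(2*k+3))) = 1 := by
      have hxy : (MvPolynomial.X 0 * MvPolynomial.X 1 : MvPolynomial (Fin 2) F) ^ ((3*k+4)*(2*k+3))
          = MvPolynomial.monomial μ 1 := by
        rw [mul_pow, MvPolynomial.X_pow_eq_monomial, MvPolynomial.X_pow_eq_monomial,
            MvPolynomial.monomial_mul, one_mul, hμ]
      rw [hxy, MvPolynomial.coeff_monomial, if_pos rfl]
    rw [hco] at hone
    exact zero_ne_one hone
  have hB : (MvPolynomial.X 0 * MvPolynomial.X 1 : MvPolynomial (Fin 2) F) ^ ((3*k+4)*(2*k+3))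
      * u ^ (2*k+1) ∈ (Ideal.span S) ^ (4*k+4) := by
    have hid : (MvPolynomial.X 0 * MvPolynomial.X 1 : MvPolynomial (Fin 2) F) ^ ((3*k+4)*(2*k+3))
        * u ^ (2*k+1) = u ^ 0 * v ^ (3*k+4) * w ^ 0 * z ^ k := by
      rw [hu, hv, hz]; ring
    rw [hid]
    exact rr_mem_pow (by simp [hS]) (by simp [hS]) (by simp [hS]) (by simp [hS]) 0 (3*k+4) 0 k _ (by omega)
  have hC : (MvPolynomial.X 0 * MvPolynomial.X 1 : MvPolynomial (Fin 2) F) ^ ((3*k+4)*(2*k+3))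
      ∈ rrPow (Ideal.span S) (2*k+3) := by
    have hcol : (MvPolynomial.X 0 * MvPolynomial.X 1 : MvPolynomial (Fin 2) F) ^ ((3*k+4)*(2*k+3))
        ∈ ((Ideal.span S) ^ ((2*k+3) + (4*k+1))).colon (((Ideal.span S) ^ (4*k+1) : Ideal _) : Set _) := by
      rw [Submodule.mem_colon]
      intro p hp
      rw [smul_eq_mul, show (2*k+3) + (4*k+1) = 6*k+4 from by omega]
      rw [SetLike.mem_coe, show (Ideal.span S)^(4*k+1) = Ideal.span (S^(4*k+1)) from Submodule.span_pow S _] at hp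
      induction hp using Submodule.span_induction with
      | mem g hg =>
        obtain ⟨a0, b0, c0, f0, hs0, rfl⟩ := hchar _ g hg
        obtain ⟨a, b, c, f, hsum, hP, hQ⟩ := rr_key k a0 b0 c0 f0 hs0
        have hid : (MvPolynomial.X 0 * MvPolynomial.X 1 : MvPolynomial (Fin 2) F) ^ ((3*k+4)*(2*k+3))
            * (MvPolynomial.X 0 ^ ((6*k+8)*a0 + (6*k+5)*b0 + 3*c0)
              * MvPolynomial.X 1 ^ (3*b0 + (6*k+5)*c0 + (6*k+8)*f0))
            = MvPolynomial.X 0 ^ ((3*k+4)*(2*k+3) + ((6*k+8)*a0 + (6*k+5)*b0 + 3*c0))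
              * MvPolynomial.X 1 ^ ((3*k+4)*(2*k+3) + (3*b0 + (6*k+5)*c0 + (6*k+8)*f0)) := by
          ring
        rw [hid, hP, hQ]
        exact hmemS a b c f _ hsum
      | zero => rw [mul_zero]; exact zero_mem _
      | add p q hp hq ih1 ih2 => rw [mul_add]; exact add_mem ih1 ih2
      | smul r p hp ih =>
        rw [smul_eq_mul, mul_left_comm]
        exact Ideal.mul_mem_left _ r ih
    unfold rrPow
    exact Submodule.mem_iSup_of_mem (4*k+1) hcol
  refine ⟨hA, hB, hC, fun hEq => hA ?_⟩
  rw [← hEq]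
  exact hC
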